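/- Let X be a metric space and let α be a real number with 0 < α < 1. Assume that for every R > 0 there exist three points x, y, z in X whose pairwise distances dist(x,y), dist(y,z), dist(x,z) are all at least R. Then for every δ > 0 the space X with the snowflaked metric dist^α is not δ-tripodal: there exist points x, y, z in X such that no point m of X satisfies all three inequalities dist(x,m)^α + dist(m,y)^α ≤ dist(x,y)^α + δ, dist(y,m)^α + dist(m,z)^α ≤ dist(y,z)^α + δ, and dist(x,m)^α + dist(m,z)^α ≤ dist(x,z)^α + δ. (In particular (X, dist^α) is not δ-median for any δ > 0.) -/

import Mathlib

open Real

/-- Increment lemma from concavity: for concave rpow,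
`f(a+s+c) + f(a) ≤ f(a+c) + f(a+s)`. -/
lemma rpow_incr {α : ℝ} (hα0 : 0 < α) (hα1 : α < 1) {a c s : ℝ}
    (ha : 0 ≤ a) (hc : 0 ≤ c) (hs : 0 ≤ s) :
    (a + s + c) ^ α + a ^ α ≤ (a + c) ^ α + (a + s) ^ α := by
  rcases eq_or_lt_of_le (by linarith : (0:ℝ) ≤ s + c) with hT | hT
  · have hs0 : s = 0 := by linarith [hc, hs, hT.symm ▸ (le_refl (0:ℝ))]
    have hc0 : c = 0 := by linarith
    simp [hs0, hc0]
  · have cv := Real.concaveOn_rpow hα0.le hα1.le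
    set T := s + c with hTdef
    have hend : (a + s + c) ∈ Set.Ici (0:ℝ) := by simp; linarith
    have hA : a ∈ Set.Ici (0:ℝ) := by simpa using ha
    have h1 : (c/T) • ((a+s+c)^α) + (s/T) • (a^α) ≤ ((c/T) • (a+s+c) + (s/T) • a) ^ α :=
      cv.2 hend hA (show (0:ℝ) ≤ c/T by positivity) (show (0:ℝ) ≤ s/T by positivity)
        (show c/T + s/T = 1 by field_simp; linarith)
    have h2 : (s/T) • ((a+s+c)^α) + (c/T) • (a^α) ≤ ((s/T) • (a+s+c) + (c/T) • a) ^ α :=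
      cv.2 hend hA (show (0:ℝ) ≤ s/T by positivity) (show (0:ℝ) ≤ c/T by positivity)
        (show s/T + c/T = 1 by field_simp; linarith)
    have e1 : (c/T) • (a+s+c) + (s/T) • a = a + c := by
      simp only [smul_eq_mul]; field_simp; ring
    have e2 : (s/T) • (a+s+c) + (c/T) • a = a + s := by
      simp only [smul_eq_mul]; field_simp; ring
    rw [e1] at h1; rw [e2] at h2
    have hsum : ((a+s+c)^α) * (c/T + s/T) + (a^α) * (s/T + c/T)
        ≤ (a+c)^α + (a+s)^α := by
      simp only [smul_eq_mul] at h1 h2; nlinarith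
    have hone : c/T + s/T = 1 := by field_simp; ring
    rw [hone] at hsum
    have hone' : s/T + c/T = 1 := by rw [← hone]; ring
    rw [hone'] at hsum
    linarith

/-- Key gap inequality: for `0 ≤ x ≤ y`,
`(x+y)^α + (2 - 2^α) * x^α ≤ x^α + y^α`. -/
lemma rpow_gap {α : ℝ} (hα0 : 0 < α) (hα1 : α < 1) {x y : ℝ}
    (hx : 0 ≤ x) (hxy : x ≤ y) :
    (x + y) ^ α + (2 - (2:ℝ) ^ α) * x ^ α ≤ x ^ α + y ^ α := by
  have h := rpow_incr hα0 hα1 hx hx (by linarith : (0:ℝ) ≤ y - x)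
  have e1 : x + (y - x) + x = x + y := by ring
  have e2 : x + (y - x) = y := by ring
  rw [e1, e2] at h
  have e3 : (x + x) ^ α = (2:ℝ)^α * x ^ α := by
    rw [show x + x = 2 * x by ring, Real.mul_rpow (by norm_num) hx]
  rw [e3] at h
  nlinarith

/-- If `m` is δ-between (in the snowflake) then it is close to one endpoint. -/
lemma min_small {α δ : ℝ} (hα0 : 0 < α) (hα1 : α < 1) {a b D : ℝ}
    (ha : 0 ≤ a) (hb : 0 ≤ b) (hD : 0 ≤ D) (htri : D ≤ a + b)
    (hbet : a ^ α + b ^ α ≤ D ^ α + δ) :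
    (2 - (2:ℝ) ^ α) * (min a b) ^ α ≤ δ := by
  rcases le_total a b with hab | hab
  · have h := rpow_gap hα0 hα1 ha hab
    have hmono : D ^ α ≤ (a + b) ^ α := Real.rpow_le_rpow hD htri hα0.le
    rw [min_eq_left hab]; linarith
  · have h := rpow_gap hα0 hα1 hb hab
    have hmono : D ^ α ≤ (b + a) ^ α := Real.rpow_le_rpow hD (by linarith) hα0.le
    rw [min_eq_right hab]; linarith

/-- Proposition 5.2(2): if X contains triples of points with all
pairwise distances arbitrarily large, then (X, dist^α) is not δ-tripodal for
any δ > 0. -/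
theorem stmt_12 {X : Type*} [MetricSpace X] (α : ℝ) (hα0 : 0 < α) (hα1 : α < 1)
    (hbig : ∀ R : ℝ, 0 < R → ∃ x y z : X,
      R ≤ dist x y ∧ R ≤ dist y z ∧ R ≤ dist x z) :
    ∀ δ : ℝ, 0 < δ → ∃ x y z : X, ∀ m : X,
      ¬ (dist x m ^ α + dist m y ^ α ≤ dist x y ^ α + δ ∧
         dist y m ^ α + dist m z ^ α ≤ dist y z ^ α + δ ∧
         dist x m ^ α + dist m z ^ α ≤ dist x z ^ α + δ) := by
  intro δ hδ
  have h2α : (2:ℝ) ^ α < 2 := by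
    calc (2:ℝ) ^ α < 2 ^ (1:ℝ) := Real.rpow_lt_rpow_of_exponent_lt (by norm_num) hα1
    _ = 2 := Real.rpow_one 2
  have hc2 : 0 < 2 - (2:ℝ) ^ α := by linarith
  set K : ℝ := (δ / (2 - (2:ℝ) ^ α)) ^ (1/α) with hK
  have hK0 : 0 ≤ K := Real.rpow_nonneg (by positivity) _
  have hKα : K ^ α = δ / (2 - (2:ℝ) ^ α) := by
    rw [hK, ← Real.rpow_mul (by positivity), one_div, inv_mul_cancel₀ hα0.ne', Real.rpow_one]
  obtain ⟨x, y, z, hxy, hyz, hxz⟩ := hbig (2*K + 1) (by positivity)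
  refine ⟨x, y, z, fun m ⟨h1, h2, h3⟩ => ?_⟩
  have near : ∀ p q : X, 2*K + 1 ≤ dist p q →
      dist p m ^ α + dist m q ^ α ≤ dist p q ^ α + δ →
      dist p m ≤ K ∨ dist m q ≤ K := by
    intro p q _ hb
    have hmin := min_small hα0 hα1 dist_nonneg dist_nonneg dist_nonneg
      (dist_triangle p m q) hb
    have hpow : (min (dist p m) (dist m q)) ^ α ≤ K ^ α := by
      rw [hKα, le_div_iff₀ hc2]
      nlinarith
    have hle : min (dist p m) (dist m q) ≤ K := by
      by_contra hlt
      push_neg at hlt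
      exact absurd hpow (not_le.mpr (Real.rpow_lt_rpow hK0 hlt hα0))
    rcases le_total (dist p m) (dist m q) with h | h
    · left; rwa [min_eq_left h] at hle
    · right; rwa [min_eq_right h] at hle
  have n1 := near x y hxy h1
  have n2 := near y z hyz h2
  have n3 := near x z hxz h3
  have dxm : dist m x = dist x m := dist_comm m x
  have dym : dist m y = dist y m := dist_comm m y
  rcases n1 with hxm | hmy
  · rcases n2 with hym | hmz
    · have := dist_triangle x m y
      rw [← dym] at hym
      linarith
    · have := dist_triangle x m z
      linarith
  · rcases n3 with hxm | hmz
    · have := dist_triangle x m y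
      linarith
    · have := dist_triangle y m z
      rw [dym] at hmy
      linarith
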